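/- Let Γ be a locally compact Hausdorff topological space equipped with a continuous action of a compact Lie group G, let φ be a G-equivariant flow on Γ, and let S ⊆ Γ be a G-invariant isolated invariant set of φ. Then there exists an index pair (M,N) for S in which both M and N are G-invariant subsets of Γ. -/

import Mathlib

open Set

/-- A (continuous) flow on a topological space `Γ`. -/
def IsFlow {Γ : Type*} [TopologicalSpace Γ] (φ : Γ × ℝ → Γ) : Prop :=
  Continuous φ ∧ (∀ x, φ (x, 0) = x) ∧ ∀ (x : Γ) (s t : ℝ), φ (φ (x, s), t) = φ (x, s + t)

/-- The maximal invariant subset of `U`. -/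
def maxInv {Γ : Type*} (φ : Γ × ℝ → Γ) (U : Set Γ) : Set Γ :=
  {u | u ∈ U ∧ ∀ t : ℝ, φ (u, t) ∈ U}

/-- `U` is a compact (isolating) neighbourhood of `S` with `Inv U = S`. -/
def IsIsolatingNbhd {Γ : Type*} [TopologicalSpace Γ] (φ : Γ × ℝ → Γ) (U S : Set Γ) : Prop :=
  IsCompact U ∧ U ∈ nhdsSet S ∧ maxInv φ U = S

/-- `S` is an isolated invariant set of the flow `φ`. -/
def IsIsolatedInvariantSet {Γ : Type*} [TopologicalSpace Γ] (φ : Γ × ℝ → Γ) (S : Set Γ) : Prop :=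
  IsCompact S ∧ ∃ U : Set Γ, IsIsolatingNbhd φ U S

/-- `(M, N)` is an index pair for the isolated invariant set `S`. -/
def IsIndexPair {Γ : Type*} [TopologicalSpace Γ] (φ : Γ × ℝ → Γ) (S M N : Set Γ) : Prop :=
  IsCompact M ∧ IsCompact N ∧ N ⊆ M ∧
  IsIsolatingNbhd φ (closure (M \ N)) S ∧
  (∀ x ∈ N, ∀ t : ℝ, 0 ≤ t →
    (∀ s ∈ Icc (0 : ℝ) t, φ (x, s) ∈ M) → ∀ s ∈ Icc (0 : ℝ) t, φ (x, s) ∈ N) ∧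
  (∀ x ∈ M, ∀ t : ℝ, 0 ≤ t → φ (x, t) ∉ M → ∃ s ∈ Icc (0 : ℝ) t, φ (x, s) ∈ N)

/-- If `K` is compact, `f` continuous and `O` open, then
`{y | ∀ k ∈ K, f (k, y) ∈ O}` is open. -/
lemma aux_isOpen_forall {X Y Z : Type*} [TopologicalSpace X] [TopologicalSpace Y]
    [TopologicalSpace Z] {K : Set X} (hK : IsCompact K) {f : X × Y → Z}
    (hf : Continuous f) {O : Set Z} (hO : IsOpen O) :
    IsOpen {y : Y | ∀ k ∈ K, f (k, y) ∈ O} := by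
  rw [isOpen_iff_forall_mem_open]
  intro y hy
  obtain ⟨u, v, -, hv, hKu, hyv, huv⟩ :=
    generalized_tube_lemma hK isCompact_singleton (hO.preimage hf)
      (by rintro ⟨a, b⟩ ⟨ha, hb⟩; rcases hb with rfl; exact hy a ha)
  exact ⟨v, fun y' hy' k hk => huv ⟨hKu hk, hy'⟩, hv, hyv rfl⟩

/-- **Equivariant existence of index pairs** (Floer): if a compact Lie group `G` acts
continuously on a locally compact Hausdorff space `Γ` and the flow `φ` is `G`-equivariant,
then every `G`-invariant isolated invariant set admits a `G`-invariant index pair. -/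
theorem exists_equivariant_index_pair
    {Γ : Type*} [TopologicalSpace Γ] [LocallyCompactSpace Γ] [T2Space Γ]
    {E : Type*} [NormedAddCommGroup E] [NormedSpace ℝ E]
    {H : Type*} [TopologicalSpace H] (I : ModelWithCorners ℝ E H)
    {G : Type*} [TopologicalSpace G] [ChartedSpace H G] [Group G] [LieGroup I (⊤ : ℕ∞) G]
    [CompactSpace G] [MulAction G Γ] [ContinuousSMul G Γ]
    (φ : Γ × ℝ → Γ) (hφ : IsFlow φ)
    (hequiv : ∀ (g : G) (x : Γ) (t : ℝ), φ (g • x, t) = g • φ (x, t))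
    (S : Set Γ) (hS : IsIsolatedInvariantSet φ S)
    (hSinv : ∀ (g : G), ∀ x ∈ S, g • x ∈ S) :
    ∃ M N : Set Γ, IsIndexPair φ S M N ∧
      (∀ (g : G), ∀ x ∈ M, g • x ∈ M) ∧ (∀ (g : G), ∀ x ∈ N, g • x ∈ N) := by
  obtain ⟨hScpt, U, hUc, hUn, hUinv⟩ := hS
  have hφc := hφ.1
  have hφ0 := hφ.2.1
  have hφadd := hφ.2.2
  have hcont : ∀ s : ℝ, Continuous fun x : Γ => φ (x, s) := fun s =>
    hφc.comp (continuous_id.prodMk continuous_const)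
  have hcont2 : ∀ x : Γ, Continuous fun s : ℝ => φ (x, s) := fun x =>
    hφc.comp (continuous_const.prodMk continuous_id)
  have hSU : S ⊆ interior U := subset_interior_iff_mem_nhdsSet.mpr hUn
  -- S is flow-invariant
  have hSflow : ∀ x ∈ S, ∀ t : ℝ, φ (x, t) ∈ S := by
    intro x hx t
    rw [← hUinv] at hx ⊢
    exact ⟨hx.2 t, fun r => by rw [hφadd]; exact hx.2 (t + r)⟩
  -- the G-averaged isolating neighbourhood N
  set N : Set Γ := {x | ∀ g : G, g • x ∈ U} with hNdef
  have hNU : N ⊆ U := fun x hx => by simpa using hx 1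
  have hNclosed : IsClosed N := by
    have h : N = ⋂ g : G, (fun x : Γ => g • x) ⁻¹' U := by
      ext x; simp [hNdef]
    rw [h]
    exact isClosed_iInter fun g => hUc.isClosed.preimage (continuous_const_smul g)
  have hNcpt : IsCompact N := hUc.of_isClosed_subset hNclosed hNU
  have hNGinvAll : ∀ (g : G), ∀ x ∈ N, g • x ∈ N := fun g x hx g' => by
    simpa [smul_smul] using hx (g' * g)
  have hNintGinv : ∀ (g : G), ∀ x ∈ interior N, g • x ∈ interior N := by
    intro g x hx
    have h1 : (fun y : Γ => g • y) '' interior N ⊆ N := by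
      rintro _ ⟨y, hy, rfl⟩; exact hNGinvAll g y (interior_subset hy)
    have h2 : IsOpen ((fun y : Γ => g • y) '' interior N) :=
      (Homeomorph.smul g (α := Γ)).isOpenMap _ isOpen_interior
    exact interior_maximal h1 h2 ⟨x, hx, rfl⟩
  have hSN : S ⊆ interior N := by
    have hopen : IsOpen {y : Γ | ∀ g ∈ (univ : Set G),
        (fun p : G × Γ => p.1 • p.2) (g, y) ∈ interior U} :=
      aux_isOpen_forall isCompact_univ continuous_smul isOpen_interior
    have hsub : {y : Γ | ∀ g ∈ (univ : Set G),
        (fun p : G × Γ => p.1 • p.2) (g, y) ∈ interior U} ⊆ N :=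
      fun y hy g => interior_subset (hy g (mem_univ g))
    exact fun x hx => interior_maximal hsub hopen
      (fun g _ => hSU (hSinv g x hx))
  have hNmax : maxInv φ N = S := by
    apply subset_antisymm
    · rw [← hUinv]
      exact fun x hx => ⟨hNU hx.1, fun t => hNU (hx.2 t)⟩
    · intro x hx
      have hxN : ∀ y ∈ S, y ∈ N := fun y hy g => interior_subset (hSU (hSinv g y hy))
      exact ⟨hxN x hx, fun t => hxN _ (hSflow x hx t)⟩
  -- closedness of the "stays in N during Icc a b" sets
  have hIccClosed : ∀ a b : ℝ, IsClosed {x : Γ | ∀ s ∈ Icc a b, φ (x, s) ∈ N} := by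
    intro a b
    have h : {x : Γ | ∀ s ∈ Icc a b, φ (x, s) ∈ N} =
        ⋂ s ∈ Icc a b, (fun x => φ (x, s)) ⁻¹' N := by
      ext x; simp
    rw [h]
    exact isClosed_biInter fun s _ => hNclosed.preimage (hcont s)
  -- choose T with K_T ⊆ interior N
  obtain ⟨T, hT0, hKT⟩ : ∃ T : ℝ, 0 < T ∧
      {x : Γ | ∀ s ∈ Icc (-T) T, φ (x, s) ∈ N} ⊆ interior N := by
    set Kf : ℕ → Set Γ := fun n => {x | ∀ s ∈ Icc (-(n + 1 : ℝ)) (n + 1 : ℝ), φ (x, s) ∈ N}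
      with hKf
    have hdir : Directed (· ⊇ ·) Kf := by
      intro m n
      have h1 : ((m : ℝ)) ≤ ((max m n : ℕ) : ℝ) := Nat.cast_le.mpr (le_max_left m n)
      have h2 : ((n : ℝ)) ≤ ((max m n : ℕ) : ℝ) := Nat.cast_le.mpr (le_max_right m n)
      exact ⟨max m n, fun x hx s hs => hx s ⟨by linarith [hs.1], by linarith [hs.2]⟩,
        fun x hx s hs => hx s ⟨by linarith [hs.1], by linarith [hs.2]⟩⟩
    have hinter : (N ∩ (interior N)ᶜ) ∩ ⋂ n, Kf n = ∅ := by
      rw [eq_empty_iff_forall_notMem]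
      rintro x ⟨⟨hxN, hxint⟩, hx⟩
      refine hxint (hSN ?_)
      rw [← hNmax]
      refine ⟨hxN, fun t => ?_⟩
      obtain ⟨n, hn⟩ := exists_nat_ge |t|
      have := mem_iInter.mp hx n
      have habs := abs_le.mp hn
      refine this t ⟨by linarith [habs.1], by linarith [habs.2]⟩
    obtain ⟨n, hn⟩ := (hNcpt.inter_right isOpen_interior.isClosed_compl).elim_directed_family_closed
      Kf (fun n => hIccClosed _ _) hinter hdir
    refine ⟨(n : ℝ) + 1, by positivity, fun x hx => ?_⟩
    by_contra hxint
    have hxN : x ∈ N := by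
      have := hx 0 ⟨by linarith [Nat.cast_nonneg (α := ℝ) n], by positivity⟩
      rwa [hφ0] at this
    exact (eq_empty_iff_forall_notMem.mp hn x) ⟨⟨hxN, hxint⟩, hx⟩
  -- the index pair
  set M : Set Γ := {x | ∀ s ∈ Icc (-T) (0 : ℝ), φ (x, s) ∈ N} with hMdef
  set Eo : Set Γ := {x | ∀ s ∈ Icc (0 : ℝ) T, φ (x, s) ∈ interior N} with hEdef
  set L : Set Γ := M ∩ Eoᶜ with hLdef
  have hMclosed : IsClosed M := hIccClosed (-T) 0
  have hMN : M ⊆ N := fun x hx => by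
    have := hx 0 ⟨neg_nonpos.mpr hT0.le, le_refl 0⟩
    rwa [hφ0] at this
  have hMcpt : IsCompact M := hNcpt.of_isClosed_subset hMclosed hMN
  have hEopen : IsOpen Eo := by
    have := aux_isOpen_forall (isCompact_Icc (a := (0 : ℝ)) (b := T))
      (f := fun p : ℝ × Γ => φ (p.2, p.1)) (O := interior N)
      (hφc.comp (continuous_snd.prodMk continuous_fst)) isOpen_interior
    exact this
  have hLclosed : IsClosed L := hMclosed.inter hEopen.isClosed_compl
  have hLcpt : IsCompact L := hMcpt.of_isClosed_subset hLclosed inter_subset_left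
  have hLM : L ⊆ M := inter_subset_left
  -- G-invariance
  have hMG : ∀ (g : G), ∀ x ∈ M, g • x ∈ M := by
    intro g x hx s hs
    rw [hequiv]
    exact hNGinvAll g _ (hx s hs)
  have hEG : ∀ (g : G), ∀ x ∈ Eo, g • x ∈ Eo := by
    intro g x hx s hs
    rw [hequiv]
    exact hNintGinv g _ (hx s hs)
  have hLG : ∀ (g : G), ∀ x ∈ L, g • x ∈ L := by
    rintro g x ⟨hxM, hxE⟩
    refine ⟨hMG g x hxM, fun hgE => hxE ?_⟩
    have := hEG g⁻¹ _ hgE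
    rwa [inv_smul_smul] at this
  -- the open core O
  set O : Set Γ := {x | ∀ s ∈ Icc (-T) T, φ (x, s) ∈ interior N} with hOdef
  have hOopen : IsOpen O := by
    have := aux_isOpen_forall (isCompact_Icc (a := (-T : ℝ)) (b := T))
      (f := fun p : ℝ × Γ => φ (p.2, p.1)) (O := interior N)
      (hφc.comp (continuous_snd.prodMk continuous_fst)) isOpen_interior
    exact this
  have hSO : S ⊆ O := fun x hx s _ => hSN (hSflow x hx s)
  have hOML : O ⊆ M \ L := by
    intro x hx
    have hxE : x ∈ Eo := fun s hs => hx s ⟨le_trans (neg_nonpos.mpr hT0.le) hs.1, hs.2⟩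
    refine ⟨fun s hs => interior_subset (hx s ⟨hs.1, le_trans hs.2 hT0.le⟩), ?_⟩
    rintro ⟨-, hxE'⟩
    exact hxE' hxE
  have hMLM : M \ L ⊆ M := diff_subset
  have hclML : closure (M \ L) ⊆ M := closure_minimal hMLM hMclosed
  refine ⟨M, L, ⟨hMcpt, hLcpt, hLM, ⟨?_, ?_, ?_⟩, ?_, ?_⟩, hMG, hLG⟩
  -- compactness of closure (M \ L)
  · exact hMcpt.of_isClosed_subset isClosed_closure hclML
  -- neighbourhood of S
  · rw [← subset_interior_iff_mem_nhdsSet]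
    exact hSO.trans (interior_maximal (fun x hx => subset_closure (hOML hx)) hOopen)
  -- maxInv = S
  · apply subset_antisymm
    · rw [← hNmax]
      exact fun x hx => ⟨hMN (hclML hx.1), fun t => hMN (hclML (hx.2 t))⟩
    · intro x hx
      exact ⟨subset_closure (hOML (hSO hx)), fun t =>
        subset_closure (hOML (hSO (hSflow x hx t)))⟩
  -- positive invariance of L relative to M
  · rintro x ⟨hxM, hxE⟩ t ht hyp r hr
    refine ⟨hyp r hr, fun hE => ?_⟩
    have hxE' : ∃ s₀ ∈ Icc (0 : ℝ) T, φ (x, s₀) ∉ interior N := by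
      by_contra h
      push_neg at h
      exact hxE h
    obtain ⟨s₀, hs₀I, hs₀⟩ := hxE'
    rcases le_or_gt r s₀ with hc | hc
    · have h1 := hE (s₀ - r) ⟨sub_nonneg.mpr hc, by linarith [hs₀I.2, hr.1]⟩
      rw [hφadd, add_sub_cancel] at h1
      exact hs₀ h1
    · refine hs₀ (hKT ?_)
      intro v hv
      rw [hφadd]
      rcases lt_or_ge (s₀ + v) 0 with h1 | h1
      · exact hxM (s₀ + v) ⟨by linarith [hv.1, hs₀I.1], h1.le⟩
      · rcases le_or_gt (s₀ + v) t with h2 | h2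
        · exact hMN (hyp (s₀ + v) ⟨h1, h2⟩)
        · have h3 : s₀ + v - r ∈ Icc (0 : ℝ) T := ⟨by linarith [hr.2], by linarith [hv.2]⟩
          have h4 := hE _ h3
          rw [hφadd] at h4
          rw [show r + (s₀ + v - r) = s₀ + v by ring] at h4
          exact interior_subset h4
  -- exit condition
  · intro x hxM t ht hxt
    have hw : ∃ w ∈ Icc (0 : ℝ) t, φ (x, w) ∉ interior N := by
      have : ∃ u ∈ Icc (-T) (0 : ℝ), φ (φ (x, t), u) ∉ N := by
        by_contra h
        push_neg at h
        exact hxt h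
      obtain ⟨u, huI, hu⟩ := this
      rw [hφadd] at hu
      refine ⟨t + u, ⟨?_, by linarith [huI.2]⟩, fun h => hu (interior_subset h)⟩
      by_contra h
      push_neg at h
      exact hu (hxM (t + u) ⟨by linarith [huI.1], by linarith⟩)
    obtain ⟨w, hwI, hw⟩ := hw
    set A : Set ℝ := {s | s ∈ Icc (0 : ℝ) t ∧ φ (x, s) ∉ interior N} with hAdef
    have hAne : A.Nonempty := ⟨w, hwI, hw⟩
    have hAbdd : BddBelow A := ⟨0, fun y hy => hy.1.1⟩
    have hAclosed : IsClosed A := by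
      have h : A = Icc (0 : ℝ) t ∩ (fun s => φ (x, s)) ⁻¹' (interior N)ᶜ := rfl
      rw [h]
      exact isClosed_Icc.inter (isOpen_interior.isClosed_compl.preimage (hcont2 x))
    set s₀ : ℝ := sInf A with hs₀def
    have hs₀A : s₀ ∈ A := hAclosed.csInf_mem hAne hAbdd
    have hbelow : ∀ s, 0 ≤ s → s < s₀ → φ (x, s) ∈ interior N := by
      intro s hs hss
      by_contra h
      exact notMem_of_lt_csInf hss hAbdd ⟨⟨hs, le_trans hss.le hs₀A.1.2⟩, h⟩
    refine ⟨s₀, hs₀A.1, ?_, ?_⟩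
    -- φ (x, s₀) ∈ M
    · intro v hv
      rw [hφadd]
      rcases lt_or_ge (s₀ + v) 0 with h1 | h1
      · exact hxM (s₀ + v) ⟨by linarith [hv.1, hs₀A.1.1], h1.le⟩
      · rcases eq_or_lt_of_le hv.2 with hveq | hvlt
        · rcases hveq with rfl
          rw [add_zero]
          rcases eq_or_lt_of_le hs₀A.1.1 with h0 | h0
          · rw [← h0, hφ0]; exact hMN hxM
          · have htend : Filter.Tendsto (fun s : ℝ => φ (x, s)) (nhdsWithin s₀ (Iio s₀))
                (nhds (φ (x, s₀))) :=
              ((hcont2 x).tendsto s₀).mono_left nhdsWithin_le_nhds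
            refine hNclosed.mem_of_tendsto htend ?_
            filter_upwards [Ioo_mem_nhdsLT_of_mem ⟨h0, le_refl s₀⟩] with s hs
            exact interior_subset (hbelow s hs.1.le hs.2)
        · exact interior_subset (hbelow (s₀ + v) h1 (by linarith))
    -- φ (x, s₀) ∉ Eo
    · intro hE
      have := hE 0 ⟨le_refl 0, hT0.le⟩
      rw [hφ0] at this
      exact hs₀A.2 this
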